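/- Let K(x, x') = Σ_{i=1}^∞ λ_i e_i(x) e_i(x') be a Mercer kernel with eigenvalues λ_1 ≥ λ_2 ≥ ⋯ ≥ 0 and orthonormal eigenfunctions e_i on a probability space X. For any n points x_1, …, x_n ∈ X with K_n = [K(x_i, x_j)] invertible, the integrated conditional variance satisfies ∫_X [K(x, x) − k(x)^T K_n^{-1} k(x)] dx ≥ Σ_{i=n+1}^∞ λ_i, where k(x) = (K(x, x_1), …, K(x, x_n))^T. Equivalently, the variance reduction ratio (∫K(x,x)dx − ∫ conditional variance dx)/(∫K(x,x)dx) is at most (Σ_{i=1}^n λ_i)/(Σ_{i=1}^∞ λ_i). -/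

import Mathlib

open MeasureTheory Matrix

section VarianceReductionAux

open Finset

private lemma vr_rearrange {l t : ℕ → ℝ} (hl : Antitone l) (hl0 : ∀ i, 0 ≤ l i)
    (hls : Summable l) (ht0 : ∀ i, 0 ≤ t i) (ht1 : ∀ i, t i ≤ 1)
    (hts : Summable t) {n : ℕ} (htn : ∑' i, t i = (n : ℝ)) :
    ∑' i, l i * t i ≤ ∑ i ∈ Finset.range n, l i := by
  have hlt0 : ∀ i, 0 ≤ l i * t i := fun i => mul_nonneg (hl0 i) (ht0 i)
  have hlts : Summable fun i => l i * t i :=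
    Summable.of_nonneg_of_le hlt0
      (fun i => by nlinarith [hl0 i, ht0 i, ht1 i]) hls
  rw [← Summable.sum_add_tsum_nat_add n hlts]
  have h2 : ∑' i, t (i + n) = (n : ℝ) - ∑ i ∈ Finset.range n, t i := by
    have := Summable.sum_add_tsum_nat_add n hts
    rw [htn] at this; linarith
  have hbound : ∑' i, l (i + n) * t (i + n) ≤ l n * ((n : ℝ) - ∑ i ∈ Finset.range n, t i) := by
    calc ∑' i, l (i + n) * t (i + n) ≤ ∑' i, l n * t (i + n) := by
          apply Summable.tsum_le_tsum
          · intro i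
            exact mul_le_mul_of_nonneg_right (hl (Nat.le_add_left n i)) (ht0 _)
          · exact (summable_nat_add_iff n).mpr hlts
          · exact ((summable_nat_add_iff n).mpr hts).mul_left _
      _ = l n * ∑' i, t (i + n) := tsum_mul_left
      _ = l n * ((n : ℝ) - ∑ i ∈ Finset.range n, t i) := by rw [h2]
  have h3 : l n * ((n : ℝ) - ∑ i ∈ Finset.range n, t i)
      ≤ ∑ i ∈ Finset.range n, l i * (1 - t i) := by
    have : l n * ((n : ℝ) - ∑ i ∈ Finset.range n, t i)
        = ∑ i ∈ Finset.range n, l n * (1 - t i) := by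
      rw [← Finset.mul_sum, Finset.sum_sub_distrib]
      simp [Finset.card_range]
    rw [this]
    apply Finset.sum_le_sum
    intro i hi
    exact mul_le_mul_of_nonneg_right (hl (le_of_lt (Finset.mem_range.mp hi))) (by linarith [ht1 i])
  have : ∑ i ∈ Finset.range n, l i * t i + ∑ i ∈ Finset.range n, l i * (1 - t i)
      = ∑ i ∈ Finset.range n, l i := by
    rw [← Finset.sum_add_distrib]; apply Finset.sum_congr rfl; intro i _; ring
  linarith

private lemma vr_pointwise_nonneg {X : Type*} (K : X → X → ℝ)
    (hsymm : ∀ x x', K x x' = K x' x)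
    (hpsd : ∀ (N : ℕ) (x : Fin N → X) (c : Fin N → ℝ),
      0 ≤ ∑ i, ∑ j, c i * c j * K (x i) (x j))
    {n : ℕ} (x : Fin n → X) (Kn : Matrix (Fin n) (Fin n) ℝ)
    (hKn : Kn = Matrix.of fun i j => K (x i) (x j)) (hinv : IsUnit Kn.det) (v : X) :
    0 ≤ K v v - (fun i => K v (x i)) ⬝ᵥ (Kn⁻¹ *ᵥ fun i => K v (x i)) := by
  have hKnw : Kn *ᵥ (Kn⁻¹ *ᵥ fun i => K v (x i)) = fun i => K v (x i) := by
    rw [Matrix.mulVec_mulVec, Matrix.mul_nonsing_inv _ hinv, Matrix.one_mulVec]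
  set w : Fin n → ℝ := Kn⁻¹ *ᵥ fun i => K v (x i) with hw
  have hwk : ∑ i, w i * ∑ j, K (x i) (x j) * w j = ∑ i, w i * K v (x i) := by
    have h := congrFun hKnw
    simp only [Matrix.mulVec, dotProduct, hKn, Matrix.of_apply] at h
    exact Finset.sum_congr rfl fun i _ => by rw [h i]
  set y : Fin (n + 1) → X := Fin.cons v x with hy
  set c : Fin (n + 1) → ℝ := Fin.cons 1 fun a => -(w a) with hc
  have h0 := hpsd (n + 1) y c
  have hS : ∑ i, ∑ j, c i * c j * K (y i) (y j)
      = K v v - ∑ i, w i * K v (x i) := by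
    simp only [hc, hy, Fin.sum_univ_succ, Fin.cons_zero, Fin.cons_succ]
    have e1 : ∑ j : Fin n, (1 : ℝ) * -w j * K v (x j) = -∑ j, w j * K v (x j) := by
      rw [← Finset.sum_neg_distrib]
      exact Finset.sum_congr rfl fun j _ => by ring
    have e2 : ∀ i, (∑ j : Fin n, -w i * -w j * K (x i) (x j))
        = w i * ∑ j, K (x i) (x j) * w j := by
      intro i
      rw [Finset.mul_sum]
      exact Finset.sum_congr rfl fun j _ => by ring
    have e3 : ∀ i : Fin n, -w i * 1 * K (x i) v = -(w i * K v (x i)) := by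
      intro i; rw [hsymm (x i) v]; ring
    simp only [e2, e3]
    rw [Finset.sum_add_distrib, e1, hwk, Finset.sum_neg_distrib]
    ring
  rw [hS] at h0
  have hdw : (fun i => K v (x i)) ⬝ᵥ w = ∑ i, w i * K v (x i) := by
    rw [dotProduct]
    exact Finset.sum_congr rfl fun i _ => mul_comm _ _
  linarith

private lemma vr_cont_integrable {X : Type*} [MetricSpace X] [CompactSpace X]
    [MeasurableSpace X] [BorelSpace X] (μ : Measure X) [IsProbabilityMeasure μ]
    {f : X → ℝ} (hf : Continuous f) : Integrable f μ :=
  hf.integrable_of_hasCompactSupport (IsClosed.isCompact (isClosed_tsupport f))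

end VarianceReductionAux

set_option maxHeartbeats 2000000

/-- Optimal variance reduction bound (Proposition 3.1): for a Mercer kernel
`K(x,x') = ∑ᵢ λᵢ eᵢ(x) eᵢ(x')` on a probability space and any `n` points
`x₁, …, xₙ` with `Kₙ = [K(xᵢ,xⱼ)]` invertible, the integrated conditional
variance satisfies `∫ (K(x,x) − k(x)ᵀ Kₙ⁻¹ k(x)) dμ ≥ ∑_{i>n} λᵢ`,
i.e. `n` observations can remove at most the top-`n` eigenvalue mass. -/
theorem variance_reduction_bound {X : Type*} [MetricSpace X] [CompactSpace X]
    [MeasurableSpace X] [BorelSpace X] (μ : Measure X) [IsProbabilityMeasure μ]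
    (K : X → X → ℝ) (hcont : Continuous fun p : X × X => K p.1 p.2)
    (hsymm : ∀ x x', K x x' = K x' x)
    (hpsd : ∀ (N : ℕ) (x : Fin N → X) (c : Fin N → ℝ),
      0 ≤ ∑ i, ∑ j, c i * c j * K (x i) (x j))
    (l : ℕ → ℝ) (hmono : Antitone l) (hnonneg : ∀ i, 0 ≤ l i)
    (e : ℕ → X → ℝ) (hmeas : ∀ i, Measurable (e i))
    (horth : ∀ i j, ∫ x, e i x * e j x ∂μ = if i = j then 1 else 0)
    (hexp : ∀ x x', K x x' = ∑' i, l i * e i x * e i x')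
    (n : ℕ) (x : Fin n → X)
    (Kn : Matrix (Fin n) (Fin n) ℝ) (hKn : Kn = Matrix.of fun i j => K (x i) (x j))
    (hinv : IsUnit Kn.det) :
    (∑' i : ℕ, l (i + n)) ≤
      ∫ v, (K v v - (fun i => K v (x i)) ⬝ᵥ (Kn⁻¹ *ᵥ fun i => K v (x i))) ∂μ := by
  classical
  by_cases hsuml : Summable l
  case neg =>
    rw [tsum_eq_zero_of_not_summable
      (fun h => hsuml ((summable_nat_add_iff n).mp h))]
    exact integral_nonneg fun v => vr_pointwise_nonneg K hsymm hpsd x Kn hKn hinv v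
  case pos =>
  -- summability at the observation points
  have hsq : ∀ a, Summable fun j => l j * e j (x a) * e j (x a) := by
    intro a
    by_contra h
    have h0 : K (x a) (x a) = 0 := by
      rw [hexp]; exact tsum_eq_zero_of_not_summable h
    have hrow : ∀ b, K (x a) (x b) = 0 := by
      intro b
      by_contra hne
      have h2 := hpsd 2 ![x a, x b] ![-(K (x b) (x b) + 1) / (2 * K (x a) (x b)), 1]
      simp only [Fin.sum_univ_two, Matrix.cons_val_zero, Matrix.cons_val_one, Matrix.head_cons,
        h0] at h2
      rw [hsymm (x b) (x a)] at h2
      have : (-(K (x b) (x b) + 1) / (2 * K (x a) (x b))) * (2 * K (x a) (x b))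
          = -(K (x b) (x b) + 1) := div_mul_cancel₀ _ (by
            intro hz
            exact hne (by nlinarith [hz]))
      nlinarith [this, h2]
    exact (by simpa using hinv.ne_zero : Kn.det ≠ 0)
      (Matrix.det_eq_zero_of_row_eq_zero a (fun b => by rw [hKn]; simpa using hrow b))
  have habs2 : ∀ a b, Summable fun j => l j * |e j (x a)| * |e j (x b)| := by
    intro a b
    apply Summable.of_nonneg_of_le
      (fun j => mul_nonneg (mul_nonneg (hnonneg j) (abs_nonneg _)) (abs_nonneg _))
      (fun j => ?_) (((hsq a).add (hsq b)).div_const 2)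
    have h1 : |e j (x a)| * |e j (x b)| ≤ (e j (x a) * e j (x a) + e j (x b) * e j (x b)) / 2 := by
      nlinarith [sq_nonneg (|e j (x a)| - |e j (x b)|), abs_nonneg (e j (x a)),
        abs_nonneg (e j (x b)), sq_abs (e j (x a)), sq_abs (e j (x b))]
    calc l j * |e j (x a)| * |e j (x b)| = l j * (|e j (x a)| * |e j (x b)|) := by ring
      _ ≤ l j * ((e j (x a) * e j (x a) + e j (x b) * e j (x b)) / 2) :=
          mul_le_mul_of_nonneg_left h1 (hnonneg j)
      _ = (l j * e j (x a) * e j (x a) + l j * e j (x b) * e j (x b)) / 2 := by ring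
  have hsab : ∀ a b, Summable fun j => l j * e j (x a) * e j (x b) := by
    intro a b
    exact Summable.of_norm ((habs2 a b).congr fun j => by
      rw [Real.norm_eq_abs, abs_mul, abs_mul, abs_of_nonneg (hnonneg j)])
  have habs1 : ∀ a, Summable fun j => l j * |e j (x a)| := by
    intro a
    apply Summable.of_nonneg_of_le (fun j => mul_nonneg (hnonneg j) (abs_nonneg _)) (fun j => ?_)
      ((hsuml.add (hsq a)).div_const 2)
    nlinarith [sq_nonneg (|e j (x a)| - 1), abs_nonneg (e j (x a)), sq_abs (e j (x a)),
      hnonneg j]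
  have he2int : ∀ i, Integrable (fun v => e i v * e i v) μ := by
    intro i
    by_contra h
    have h2 := integral_undef h
    rw [horth i i] at h2; simp at h2
  have heijint : ∀ i j, Integrable (fun v => e i v * e j v) μ := by
    intro i j
    apply Integrable.mono' (((he2int i).add (he2int j)).div_const 2)
      (((hmeas i).mul (hmeas j)).aestronglyMeasurable)
    filter_upwards with v
    simp only [Pi.add_apply, Pi.mul_apply, Real.norm_eq_abs, abs_mul]
    nlinarith [sq_nonneg (|e i v| - |e j v|), abs_nonneg (e i v), abs_nonneg (e j v),
      sq_abs (e i v), sq_abs (e j v)]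
  have heijnorm : ∀ i j, ∫ v, ‖e i v * e j v‖ ∂μ ≤ 1 := by
    intro i j
    have hb : ∫ v, (e i v * e i v + e j v * e j v) / 2 ∂μ = 1 := by
      rw [integral_div, integral_add (he2int i) (he2int j), horth i i, horth j j]
      norm_num
    rw [← hb]
    apply integral_mono (heijint i j).norm (((he2int i).add (he2int j)).div_const 2)
    intro v
    simp only [Pi.add_apply, Real.norm_eq_abs, abs_mul]
    nlinarith [sq_nonneg (|e i v| - |e j v|), abs_nonneg (e i v), abs_nonneg (e j v),
      sq_abs (e i v), sq_abs (e j v)]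
  have hkey : ∀ (i j : ℕ) (c : ℝ), ∫⁻ v, ‖c * (e i v * e j v)‖₊ ∂μ ≤ ENNReal.ofReal |c| := by
    intro i j c
    have hint : Integrable (fun v => c * (e i v * e j v)) μ := (heijint i j).const_mul c
    simp only [← enorm_eq_nnnorm]
    rw [← ofReal_integral_norm_eq_lintegral_enorm hint]
    apply ENNReal.ofReal_le_ofReal
    calc ∫ v, ‖c * (e i v * e j v)‖ ∂μ = |c| * ∫ v, ‖e i v * e j v‖ ∂μ := by
          simp_rw [norm_mul, Real.norm_eq_abs (c)]
          rw [integral_const_mul]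
      _ ≤ |c| * 1 := mul_le_mul_of_nonneg_left (heijnorm i j) (abs_nonneg c)
      _ = |c| := mul_one _
  have hmeas2 : ∀ i j : ℕ, ∀ c : ℝ, AEStronglyMeasurable (fun v => c * (e i v * e j v)) μ :=
    fun i j c => (((hmeas i).mul (hmeas j)).const_mul c).aestronglyMeasurable
  have hofr : ∀ (f : ℕ → ℝ), (∀ i, 0 ≤ f i) → Summable f →
      ∑' i, ENNReal.ofReal (f i) ≠ ⊤ := by
    intro f hf hs
    rw [← ENNReal.ofReal_tsum_of_nonneg hf hs]
    exact ENNReal.ofReal_ne_top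
  -- the integral of the diagonal
  have hI1 : ∫ v, K v v ∂μ = ∑' i, l i := by
    have h1 : (fun v => K v v) = fun v => ∑' i, l i * (e i v * e i v) := by
      funext v; rw [hexp v v]; exact tsum_congr fun i => by ring
    rw [h1, integral_tsum (fun i => hmeas2 i i (l i)) ?_]
    · exact tsum_congr fun i => by
        rw [integral_const_mul, horth i i]; simp
    · apply ne_top_of_le_ne_top (hofr l hnonneg hsuml)
      apply ENNReal.tsum_le_tsum
      intro i
      simpa [abs_of_nonneg (hnonneg i), enorm_eq_nnnorm] using hkey i i (l i)
  -- a.e. summability of the diagonal series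
  have hae : ∀ᵐ v ∂μ, Summable fun i => l i * (e i v * e i v) := by
    have h1 : ∑' i, ∫⁻ v, ‖l i * (e i v * e i v)‖₊ ∂μ ≠ ⊤ := by
      apply ne_top_of_le_ne_top (hofr l hnonneg hsuml)
      apply ENNReal.tsum_le_tsum
      intro i
      simpa [abs_of_nonneg (hnonneg i)] using hkey i i (l i)
    have hm : ∀ i : ℕ, AEMeasurable (fun v => (‖l i * (e i v * e i v)‖₊ : ENNReal)) μ :=
      fun i => (((hmeas i).mul (hmeas i)).const_mul (l i)).nnnorm.coe_nnreal_ennreal.aemeasurable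
    rw [← lintegral_tsum hm] at h1
    refine (ae_lt_top' (AEMeasurable.ennreal_tsum hm) h1).mono ?_
    intro v hv
    have := ENNReal.tsum_coe_ne_top_iff_summable_coe.mp hv.ne
    apply Summable.of_norm
    exact this.congr fun i => by rw [← coe_nnnorm]
  -- the off-diagonal second-moment integrals
  have hI2 : ∀ a b, ∫ v, K v (x a) * K v (x b) ∂μ
      = ∑' j, l j ^ 2 * (e j (x a) * e j (x b)) := by
    intro a b
    set C : ℕ × ℕ → ℝ := fun p => l p.1 * e p.1 (x a) * l p.2 * e p.2 (x b) with hC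
    have hCabs : ∀ p : ℕ × ℕ, |C p| = (l p.1 * |e p.1 (x a)|) * (l p.2 * |e p.2 (x b)|) := by
      intro p
      rw [hC]
      simp only [abs_mul, abs_of_nonneg (hnonneg p.1), abs_of_nonneg (hnonneg p.2)]
      ring
    have hCsum : Summable fun p : ℕ × ℕ => (l p.1 * |e p.1 (x a)|) * (l p.2 * |e p.2 (x b)|) :=
      (habs1 a).mul_of_nonneg (habs1 b)
        (fun j => mul_nonneg (hnonneg j) (abs_nonneg _))
        (fun j => mul_nonneg (hnonneg j) (abs_nonneg _))
    have hptwise : ∀ᵐ v ∂μ, K v (x a) * K v (x b)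
        = ∑' p : ℕ × ℕ, C p * (e p.1 v * e p.2 v) := by
      filter_upwards [hae] with v hv
      have hA : ∀ (d : Fin n), Summable fun i => ‖l i * e i v * e i (x d)‖ := by
        intro d
        apply Summable.of_nonneg_of_le
          (f := fun i => (l i * e i v * e i v + l i * e i (x d) * e i (x d)) / 2)
          (fun i => norm_nonneg _) (fun i => ?_)
          (((hv.congr fun i => by ring : Summable fun i => l i * e i v * e i v).add
            (hsq d)).div_const 2)
        rw [Real.norm_eq_abs, abs_mul, abs_mul, abs_of_nonneg (hnonneg i)]
        nlinarith [sq_nonneg (|e i v| - |e i (x d)|), abs_nonneg (e i v), abs_nonneg (e i (x d)),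
          sq_abs (e i v), sq_abs (e i (x d)), hnonneg i, abs_mul_abs_self (e i v),
          abs_mul_abs_self (e i (x d))]
      rw [hexp v (x a), hexp v (x b), tsum_mul_tsum_of_summable_norm (hA a) (hA b)]
      exact tsum_congr fun p => by rw [hC]; ring
    rw [integral_congr_ae hptwise,
      integral_tsum (fun p => hmeas2 p.1 p.2 (C p)) ?_]
    · have hval : ∀ p : ℕ × ℕ, ∫ v, C p * (e p.1 v * e p.2 v) ∂μ
          = if p.1 = p.2 then C p else 0 := by
        intro p
        rw [integral_const_mul, horth p.1 p.2]
        split <;> simp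
      rw [tsum_congr hval]
      have hgsum : Summable fun p : ℕ × ℕ => if p.1 = p.2 then C p else 0 := by
        apply Summable.of_norm_bounded hCsum
        intro p
        by_cases h : p.1 = p.2
        · rw [if_pos h, Real.norm_eq_abs, hCabs p]
        · rw [if_neg h, norm_zero]
          exact mul_nonneg (mul_nonneg (hnonneg _) (abs_nonneg _))
            (mul_nonneg (hnonneg _) (abs_nonneg _))
      rw [Summable.tsum_prod hgsum]
      apply tsum_congr
      intro i
      rw [tsum_eq_single i (fun j hj => by simp [Ne.symm hj])]
      simp only [hC, eq_self_iff_true, if_true]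
      ring
    · have hofr2 : ∑' p : ℕ × ℕ,
          ENNReal.ofReal ((l p.1 * |e p.1 (x a)|) * (l p.2 * |e p.2 (x b)|)) ≠ ⊤ := by
        rw [← ENNReal.ofReal_tsum_of_nonneg
          (fun p => mul_nonneg (mul_nonneg (hnonneg _) (abs_nonneg _))
            (mul_nonneg (hnonneg _) (abs_nonneg _))) hCsum]
        exact ENNReal.ofReal_ne_top
      apply ne_top_of_le_ne_top hofr2
      apply ENNReal.tsum_le_tsum
      intro p
      calc ∫⁻ v, ‖C p * (e p.1 v * e p.2 v)‖₊ ∂μ ≤ ENNReal.ofReal |C p| :=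
            hkey p.1 p.2 (C p)
        _ = ENNReal.ofReal ((l p.1 * |e p.1 (x a)|) * (l p.2 * |e p.2 (x b)|)) := by rw [hCabs]
  -- the matrix algebra
  have hKnab : ∀ a b, Kn a b = ∑' j, l j * e j (x a) * e j (x b) := by
    intro a b; rw [hKn]; exact hexp (x a) (x b)
  have hKnsymm : ∀ a b, Kn a b = Kn b a := by
    intro a b; rw [hKn]; exact hsymm (x a) (x b)
  have hquad : ∀ w : Fin n → ℝ, w ⬝ᵥ (Kn *ᵥ w) = ∑' j, l j * (∑ a, w a * e j (x a)) ^ 2 := by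
    intro w
    have h1 : w ⬝ᵥ (Kn *ᵥ w) = ∑ a, ∑ b, ∑' j, (w a * w b) * (l j * e j (x a) * e j (x b)) := by
      rw [dotProduct]
      apply Finset.sum_congr rfl
      intro a _
      rw [show (Kn *ᵥ w) a = ∑ b, Kn a b * w b from rfl, Finset.mul_sum]
      apply Finset.sum_congr rfl
      intro b _
      calc w a * (Kn a b * w b) = (w a * w b) * Kn a b := by ring
        _ = (w a * w b) * ∑' j, l j * e j (x a) * e j (x b) := by rw [hKnab]
        _ = ∑' j, (w a * w b) * (l j * e j (x a) * e j (x b)) := tsum_mul_left.symm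
    rw [h1]
    have h2 : ∀ a, ∑ b, ∑' j, (w a * w b) * (l j * e j (x a) * e j (x b))
        = ∑' j, ∑ b, (w a * w b) * (l j * e j (x a) * e j (x b)) := by
      intro a
      exact (Summable.tsum_finsetSum fun b _ => ((hsab a b).mul_left _)).symm
    simp_rw [h2]
    rw [← Summable.tsum_finsetSum (fun a _ => by
      apply summable_sum
      intro b _
      exact (hsab a b).mul_left _)]
    apply tsum_congr
    intro j
    rw [sq, Finset.sum_mul_sum, Finset.mul_sum]
    apply Finset.sum_congr rfl
    intro a _
    rw [Finset.mul_sum]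
    exact Finset.sum_congr rfl fun b _ => by ring
  set w : ℕ → Fin n → ℝ := fun j => Kn⁻¹ *ᵥ fun a => e j (x a) with hw
  set q : ℕ → ℝ := fun j => (fun a => e j (x a)) ⬝ᵥ w j with hq
  have hKnwj : ∀ j, Kn *ᵥ w j = fun a => e j (x a) := by
    intro j
    rw [hw, Matrix.mulVec_mulVec, Matrix.mul_nonsing_inv _ hinv, Matrix.one_mulVec]
  have hqw : ∀ j, q j = w j ⬝ᵥ (Kn *ᵥ w j) := by
    intro j
    rw [hKnwj j, hq]
    exact dotProduct_comm _ _
  have hwphi : ∀ j, ∑ a, w j a * e j (x a) = q j := by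
    intro j
    rw [hq]
    simp only [dotProduct]
    exact Finset.sum_congr rfl fun a _ => mul_comm _ _
  have hsummand : ∀ u : Fin n → ℝ, Summable fun j => l j * (∑ a, u a * e j (x a)) ^ 2 := by
    intro u
    apply Summable.congr (f := fun j => ∑ a, ∑ b, (u a * u b) * (l j * e j (x a) * e j (x b)))
    · apply summable_sum
      intro a _
      apply summable_sum
      intro b _
      exact (hsab a b).mul_left _
    · intro j
      rw [sq, Finset.sum_mul_sum, Finset.mul_sum]
      symm
      apply Finset.sum_congr rfl
      intro a _
      rw [Finset.mul_sum]
      exact Finset.sum_congr rfl fun b _ => by ring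
  have hq0 : ∀ j, 0 ≤ q j := by
    intro j
    rw [hqw j, hquad]
    exact tsum_nonneg fun j' => mul_nonneg (hnonneg _) (sq_nonneg _)
  have ht1 : ∀ j, l j * q j ≤ 1 := by
    intro j
    have h1 : l j * q j ^ 2 ≤ q j := by
      have := Summable.le_tsum (hsummand (w j)) j
        (fun j' _ => mul_nonneg (hnonneg _) (sq_nonneg _))
      rw [hwphi j] at this
      calc l j * q j ^ 2 ≤ ∑' j', l j' * (∑ a, w j a * e j' (x a)) ^ 2 := this
        _ = w j ⬝ᵥ (Kn *ᵥ w j) := (hquad (w j)).symm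
        _ = q j := (hqw j).symm
    rcases eq_or_lt_of_le (hq0 j) with h | h
    · rw [← h]; norm_num
    · nlinarith [hnonneg j, h1, h]
  have hqexpand : ∀ j, q j = ∑ a, ∑ b, Kn⁻¹ a b * (e j (x a) * e j (x b)) := by
    intro j
    rw [hq]
    simp only [dotProduct]
    apply Finset.sum_congr rfl
    intro a _
    rw [show w j a = ∑ b, Kn⁻¹ a b * e j (x b) from rfl, Finset.mul_sum]
    exact Finset.sum_congr rfl fun b _ => by ring
  have htsumq : Summable fun j => l j * q j := by
    apply Summable.congr
      (f := fun j => ∑ a, ∑ b, Kn⁻¹ a b * (l j * e j (x a) * e j (x b)))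
    · apply summable_sum
      intro a _
      apply summable_sum
      intro b _
      exact (hsab a b).mul_left _
    · intro j
      rw [hqexpand j, Finset.mul_sum]
      symm
      apply Finset.sum_congr rfl
      intro a _
      rw [Finset.mul_sum]
      exact Finset.sum_congr rfl fun b _ => by ring
  have htrace : ∑' j, l j * q j = (n : ℝ) := by
    have e4 : ∀ j, l j * q j = ∑ a, ∑ b, Kn⁻¹ a b * (l j * e j (x a) * e j (x b)) := by
      intro j
      rw [hqexpand j, Finset.mul_sum]
      apply Finset.sum_congr rfl
      intro a _
      rw [Finset.mul_sum]
      exact Finset.sum_congr rfl fun b _ => by ring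
    have h1 : ∑' j, l j * q j
        = ∑ a, ∑ b, Kn⁻¹ a b * ∑' j, l j * e j (x a) * e j (x b) := by
      rw [tsum_congr e4,
        Summable.tsum_finsetSum (f := fun a j => ∑ b, Kn⁻¹ a b * (l j * e j (x a) * e j (x b)))
          (fun a _ => summable_sum fun b _ => (hsab a b).mul_left _)]
      apply Finset.sum_congr rfl
      intro a _
      rw [Summable.tsum_finsetSum (f := fun b j => Kn⁻¹ a b * (l j * e j (x a) * e j (x b)))
        (fun b _ => (hsab a b).mul_left _)]
      exact Finset.sum_congr rfl fun b _ => tsum_mul_left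
    rw [h1]
    have h2 : ∀ a b, Kn⁻¹ a b * ∑' j, l j * e j (x a) * e j (x b) = Kn⁻¹ a b * Kn b a := by
      intro a b
      rw [← hKnab a b, hKnsymm a b]
    simp_rw [h2]
    have h3 : ∀ a, ∑ b, Kn⁻¹ a b * Kn b a = (1 : Matrix (Fin n) (Fin n) ℝ) a a := by
      intro a
      rw [← Matrix.nonsing_inv_mul _ hinv]
      rfl
    simp_rw [h3]
    simp
  -- rearrangement bound
  have hrearr : ∑' i, l i * (l i * q i) ≤ ∑ i ∈ Finset.range n, l i :=
    vr_rearrange hmono hnonneg hsuml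
      (fun j => mul_nonneg (hnonneg j) (hq0 j)) ht1 htsumq htrace
  -- final assembly
  have hKc : ∀ y, Continuous fun v => K v y :=
    fun y => hcont.comp (continuous_id.prodMk continuous_const)
  have hint1 : Integrable (fun v => K v v) μ :=
    vr_cont_integrable μ (hcont.comp (continuous_id.prodMk continuous_id))
  have hint2 : ∀ a b, Integrable (fun v => K v (x a) * K v (x b)) μ :=
    fun a b => vr_cont_integrable μ ((hKc _).mul (hKc _))
  have hQexpand : ∀ v, (fun i => K v (x i)) ⬝ᵥ (Kn⁻¹ *ᵥ fun i => K v (x i))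
      = ∑ a, ∑ b, Kn⁻¹ a b * (K v (x a) * K v (x b)) := by
    intro v
    simp only [dotProduct, Matrix.mulVec]
    apply Finset.sum_congr rfl
    intro a _
    rw [Finset.mul_sum]
    exact Finset.sum_congr rfl fun b _ => by ring
  have hQint : Integrable (fun v => (fun i => K v (x i)) ⬝ᵥ (Kn⁻¹ *ᵥ fun i => K v (x i))) μ := by
    apply Integrable.congr (f := fun v => ∑ a, ∑ b, Kn⁻¹ a b * (K v (x a) * K v (x b)))
    · apply integrable_finset_sum
      intro a _
      apply integrable_finset_sum
      intro b _
      exact (hint2 a b).const_mul _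
    · filter_upwards with v
      exact (hQexpand v).symm
  have hsab2 : ∀ a b, Summable fun j => l j ^ 2 * (e j (x a) * e j (x b)) := by
    intro a b
    apply Summable.of_norm_bounded (((hsab a b).abs).mul_left (l 0))
    intro j
    have h2 : l j ≤ l 0 := hmono (Nat.zero_le j)
    have e1 : ‖l j ^ 2 * (e j (x a) * e j (x b))‖ = l j ^ 2 * |e j (x a) * e j (x b)| := by
      rw [Real.norm_eq_abs, abs_mul, abs_of_nonneg (sq_nonneg (l j))]
    have e2 : |l j * e j (x a) * e j (x b)| = l j * |e j (x a) * e j (x b)| := by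
      rw [mul_assoc, abs_mul, abs_of_nonneg (hnonneg j)]
    rw [e1, e2]
    nlinarith [abs_nonneg (e j (x a) * e j (x b)), hnonneg j,
      mul_le_mul_of_nonneg_right h2 (abs_nonneg (e j (x a) * e j (x b)))]
  have hIQ : ∫ v, (fun i => K v (x i)) ⬝ᵥ (Kn⁻¹ *ᵥ fun i => K v (x i)) ∂μ
      = ∑' j, l j * (l j * q j) := by
    rw [integral_congr_ae (ae_of_all μ hQexpand)]
    rw [integral_finset_sum _ (f := fun a v => ∑ b, Kn⁻¹ a b * (K v (x a) * K v (x b)))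
      (fun a _ => integrable_finset_sum _
      (fun b _ => (hint2 a b).const_mul _))]
    have h3 : ∀ a, ∫ v, ∑ b, Kn⁻¹ a b * (K v (x a) * K v (x b)) ∂μ
        = ∑ b, Kn⁻¹ a b * ∑' j, l j ^ 2 * (e j (x a) * e j (x b)) := by
      intro a
      rw [integral_finset_sum _ (f := fun b v => Kn⁻¹ a b * (K v (x a) * K v (x b)))
        (fun b _ => (hint2 a b).const_mul _)]
      exact Finset.sum_congr rfl fun b _ => by rw [integral_const_mul, hI2 a b]
    rw [Finset.sum_congr rfl fun a _ => h3 a]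
    have e4 : ∀ j, l j * (l j * q j)
        = ∑ a, ∑ b, Kn⁻¹ a b * (l j ^ 2 * (e j (x a) * e j (x b))) := by
      intro j
      rw [hqexpand j, Finset.mul_sum, Finset.mul_sum]
      apply Finset.sum_congr rfl
      intro a _
      rw [Finset.mul_sum, Finset.mul_sum]
      exact Finset.sum_congr rfl fun b _ => by ring
    rw [tsum_congr e4, Summable.tsum_finsetSum
      (f := fun a j => ∑ b, Kn⁻¹ a b * (l j ^ 2 * (e j (x a) * e j (x b))))
      (fun a _ => summable_sum fun b _ => (hsab2 a b).mul_left _)]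
    apply Finset.sum_congr rfl
    intro a _
    rw [Summable.tsum_finsetSum (f := fun b j => Kn⁻¹ a b * (l j ^ 2 * (e j (x a) * e j (x b))))
      (fun b _ => (hsab2 a b).mul_left _)]
    exact Finset.sum_congr rfl fun b _ => tsum_mul_left.symm
  rw [integral_sub hint1 hQint, hI1, hIQ]
  have htail := Summable.sum_add_tsum_nat_add n hsuml
  linarith [hrearr]
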